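/- Let M ≥ 2 be an integer and let p_0, p_1, …, p_M be real numbers with p_0 = p_M = 0. Then ∑_{m=0}^{M} p_m² ≤ (1/(2·(1 - cos(π/M)))) · ∑_{m=0}^{M-1} (p_{m+1} - p_m)². -/

import Mathlib

open Real

/-- Discrete Poincaré inequality: if `p 0 = p M = 0` then
`∑_{m=0}^{M} p_m² ≤ (1/(2(1 - cos(π/M)))) ∑_{m=0}^{M-1} (p_{m+1} - p_m)²`. -/
theorem stmt1 (M : ℕ) (hM : 2 ≤ M) (p : ℕ → ℝ) (hp0 : p 0 = 0) (hpM : p M = 0) :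
    ∑ m ∈ Finset.range (M + 1), (p m) ^ 2 ≤
      (1 / (2 * (1 - Real.cos (π / M)))) *
        ∑ m ∈ Finset.range M, (p (m + 1) - p m) ^ 2 := by
  have hMpos : (0:ℝ) < (M:ℝ) := by positivity
  have hM0 : (M:ℝ) ≠ 0 := ne_of_gt hMpos
  set θ : ℝ := π / M with hθ
  have hθpos : 0 < θ := div_pos Real.pi_pos hMpos
  have hθle : θ ≤ π / 2 := by
    rw [hθ, div_le_div_iff₀ hMpos two_pos]
    have h2M : (2:ℝ) ≤ (M:ℝ) := by exact_mod_cast hM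
    exact mul_le_mul_of_nonneg_left h2M Real.pi_pos.le
  have hθlt2π : θ < 2 * π := by nlinarith [Real.pi_pos]
  have hcos : Real.cos θ < 1 := by
    rcases lt_or_eq_of_le (Real.cos_le_one θ) with h | h
    · exact h
    · exfalso
      have := (Real.cos_eq_one_iff_of_lt_of_lt (by linarith [Real.pi_pos]) hθlt2π).mp h
      exact absurd this (ne_of_gt hθpos)
  have hlam : 0 < 2 * (1 - Real.cos θ) := by linarith
  -- the test sequence
  set s : ℕ → ℝ := fun m => Real.sin (m * θ) with hs
  have hMθ : (M:ℝ) * θ = π := by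
    rw [hθ]; field_simp
  have hsM : s M = 0 := by
    simp only [hs, hMθ, Real.sin_pi]
  have hs0 : s 0 = 0 := by simp [hs]
  have hspos : ∀ m : ℕ, 1 ≤ m → m < M → 0 < s m := by
    intro m h1 h2
    apply Real.sin_pos_of_pos_of_lt_pi
    · have : (1:ℝ) ≤ (m:ℝ) := by exact_mod_cast h1
      nlinarith
    · have : (m:ℝ) < (M:ℝ) := by exact_mod_cast h2
      rw [← hMθ]
      exact mul_lt_mul_of_pos_right this hθpos
  have hrec : ∀ m : ℕ, s (m + 2) = 2 * Real.cos θ * s (m + 1) - s m := by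
    intro m
    simp only [hs]
    push_cast
    have e1 : ((m:ℝ) + 2) * θ = ((m:ℝ) + 1) * θ + θ := by ring
    have e2 : (m:ℝ) * θ = ((m:ℝ) + 1) * θ - θ := by ring
    rw [e1, e2, Real.sin_add, Real.sin_sub]
    ring
  set r : ℕ → ℝ := fun m => 1 - s (m + 1) / s m with hr
  set f : ℕ → ℝ := fun m => r m * p m ^ 2 with hf
  have key : ∀ m ∈ Finset.range M,
      2 * (1 - Real.cos θ) * p (m + 1) ^ 2 + (f m - f (m + 1)) ≤ (p (m + 1) - p m) ^ 2 := by
    intro m hm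
    rw [Finset.mem_range] at hm
    by_cases hm1 : m + 1 = M
    · -- last term : p (m+1) = 0, s (m+1) = 0
      have hpm1 : p (m + 1) = 0 := by rw [hm1]; exact hpM
      have hsm1 : s (m + 1) = 0 := by rw [hm1]; exact hsM
      simp only [hf, hr, hpm1, hsm1, zero_div]
      ring_nf
      nlinarith [sq_nonneg (p m)]
    · by_cases hm0 : m = 0
      · -- first term
        subst hm0
        have hs1pos : 0 < s 1 := hspos 1 le_rfl (by omega)
        have hs2 : s 2 = 2 * Real.cos θ * s 1 - s 0 := hrec 0
        rw [hs0] at hs2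
        have hdiv : s 2 / s 1 = 2 * Real.cos θ := by
          rw [hs2]; field_simp; ring
        simp only [hf, hr, hp0, hdiv, hs0]
        ring_nf
        nlinarith [sq_nonneg (p 1)]
      · -- middle terms
        have h1 : 1 ≤ m := by omega
        have h2 : m + 1 < M := by omega
        have ha : 0 < s m := hspos m h1 (by omega)
        have hb : 0 < s (m + 1) := hspos (m + 1) (by omega) h2
        have hc : s (m + 2) = 2 * Real.cos θ * s (m + 1) - s m := hrec m
        set a := s m
        set b := s (m + 1)
        set P := p m
        set Q := p (m + 1)
        have expand : 2 * (1 - Real.cos θ) * Q ^ 2 + ((1 - b / a) * P ^ 2 -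
            (1 - (2 * Real.cos θ * b - a) / b) * Q ^ 2)
            = (Q - P) ^ 2 - (a * Q - b * P) ^ 2 / (a * b) := by
          field_simp
          ring
        have hnn : 0 ≤ (a * Q - b * P) ^ 2 / (a * b) :=
          div_nonneg (sq_nonneg _) (le_of_lt (mul_pos ha hb))
        simp only [hf, hr, hc]
        linarith [expand, hnn]
  have h1 : ∑ m ∈ Finset.range M,
      (2 * (1 - Real.cos θ) * p (m + 1) ^ 2 + (f m - f (m + 1)))
      ≤ ∑ m ∈ Finset.range M, (p (m + 1) - p m) ^ 2 := Finset.sum_le_sum key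
  have h2 : ∑ m ∈ Finset.range M,
      (2 * (1 - Real.cos θ) * p (m + 1) ^ 2 + (f m - f (m + 1)))
      = 2 * (1 - Real.cos θ) * ∑ m ∈ Finset.range (M + 1), p m ^ 2 := by
    rw [Finset.sum_add_distrib, Finset.sum_range_sub' f, ← Finset.mul_sum,
      Finset.sum_range_succ' (fun m => p m ^ 2) M]
    simp [hf, hp0, hpM]
  rw [h2] at h1
  rw [one_div, inv_mul_eq_div, le_div_iff₀ hlam]
  linarith
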